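/- arXiv:1801.08972 — 2 statements merged into one kernel-verified Lean document; each statement's English description precedes it below -/
import Mathlib

section
/- Let r ≥ 2 be an even integer and let G be the cograph with regular balanced cotree T_G(a_1,…,a_{r−1},0 | 0,…,0,b_r), on n = a_1 a_2 ⋯ a_{r−1} b_r vertices. Then for every real number λ with λ ≠ 0 and λ ≠ −b_r, the multiplicity of λ as an eigenvalue of G satisfies m(λ) ≤ a_1 a_2 ⋯ a_{r−2}. -/
open Polynomial

/-- The characteristic polynomial of the adjacency matrix of a finite simple graph. -/
noncomputable def graphCharpoly {V : Type} [Fintype V] (G : SimpleGraph V) : Polynomial ℝ :=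
  letI := Classical.decEq V
  letI : DecidableRel G.Adj := Classical.decRel _
  (SimpleGraph.adjMatrix ℝ G).charpoly

/-- The multiplicity `m(lam)` of `lam` as an eigenvalue of `G`, i.e. its multiplicity as a
root of the characteristic polynomial of the adjacency matrix of `G`. -/
noncomputable def eigMult {V : Type} [Fintype V] (G : SimpleGraph V) (lam : ℝ) : ℕ :=
  (graphCharpoly G).rootMultiplicity lam

/-- The energy of a graph: the sum of the absolute values of the eigenvalues of its
adjacency matrix, counted with multiplicity. -/
noncomputable def graphEnergy {V : Type} [Fintype V] (G : SimpleGraph V) : ℝ :=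
  ((graphCharpoly G).roots.map (fun x => |x|)).sum

/-- The vertex type of the cograph with regular balanced cotree: iterated copies. -/
def copiesVertex : List ℕ → ℕ → Type
  | [], b => Fin b
  | a :: rest, b => Fin a × copiesVertex rest b

instance copiesVertexFintype : ∀ (l : List ℕ) (b : ℕ), Fintype (copiesVertex l b)
  | [], b => inferInstanceAs (Fintype (Fin b))
  | a :: rest, b =>
      haveI := copiesVertexFintype rest b
      inferInstanceAs (Fintype (Fin a × copiesVertex rest b))

/-- `m` pairwise disjoint copies of `H`, with all edges between distinct copies added when
`j = true` (join), and no edges between copies when `j = false` (disjoint union). -/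
def levelGraph {V : Type} (m : ℕ) (H : SimpleGraph V) (j : Bool) : SimpleGraph (Fin m × V) where
  Adj x y := (x.1 = y.1 ∧ H.Adj x.2 y.2) ∨ (x.1 ≠ y.1 ∧ j = true)
  symm := ⟨by
    rintro ⟨i, x⟩ ⟨k, y⟩ (⟨h1, h2⟩ | ⟨h1, h2⟩)
    · exact Or.inl ⟨h1.symm, h2.symm⟩
    · exact Or.inr ⟨fun h => h1 h.symm, h2⟩⟩
  loopless := ⟨by
    rintro ⟨i, x⟩ (⟨_, h⟩ | ⟨h, _⟩)
    · exact H.loopless.irrefl x h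
    · exact h rfl⟩

/-- The complete graph on `b` vertices if `j = true`, the edgeless graph otherwise. -/
def baseGraph (b : ℕ) (j : Bool) : SimpleGraph (Fin b) := if j then ⊤ else ⊥

/-- The cograph `H_0` with regular balanced cotree `T_G(a_1, …, a_{r-1}, 0 | 0, …, 0, b)`,
where `l = [a_1, …, a_{r-1}]`; the top level is a join when `j = true`.  (So the graph `G`
of the paper is `cotreeGraph [a_1, …, a_{r-1}] b_r true`: the levels alternate join/union
starting with a join at depth 0, and the deepest level is a clique `K_{b_r}` exactly when
`r` is odd.) -/
def cotreeGraph : ∀ (l : List ℕ) (b : ℕ) (j : Bool), SimpleGraph (copiesVertex l b)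
  | [], b, j => baseGraph b j
  | a :: rest, b, j => levelGraph a (cotreeGraph rest b (!j)) j

namespace CotreeAux
open Matrix


def flipN (n : ℕ) (j : Bool) : Bool := if Even n then j else !j

lemma flipN_succ (n : ℕ) (j : Bool) : flipN (n+1) j = flipN n (!j) := by
  by_cases h : Even n <;> simp [flipN, Nat.even_add_one, h]

def cvEquiv : ∀ (as : List ℕ) (al b : ℕ),
    copiesVertex (as ++ [al]) b ≃ (copiesVertex as 1) × (Fin al × Fin b)
  | [], al, b =>
    { toFun := fun v => ((0 : Fin 1), v)
      invFun := fun p => p.2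
      left_inv := fun v => rfl
      right_inv := fun p => by
        obtain ⟨i, w⟩ := p
        have h : ((0 : Fin 1)) = i := Subsingleton.elim (α := Fin 1) _ _
        show (((0 : Fin 1), w) : Fin 1 × (Fin al × Fin b)) = (i, w)
        rw [h]; rfl }
  | a :: rest, al, b =>
    ((Equiv.refl (Fin a)).prodCongr (cvEquiv rest al b)).trans
      (Equiv.prodAssoc _ _ _).symm

lemma cvEquiv_cons (a : ℕ) (rest : List ℕ) (al b : ℕ) (i : Fin a)
    (u : copiesVertex (rest ++ [al]) b) :
    cvEquiv (a :: rest) al b (i, u) =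
      ((i, (cvEquiv rest al b u).1), (cvEquiv rest al b u).2) := rfl

lemma adj_iff : ∀ (as : List ℕ) (al b : ℕ) (j : Bool) (u v : copiesVertex (as ++ [al]) b),
    (cotreeGraph (as ++ [al]) b j).Adj u v ↔
      (((cvEquiv as al b u).1 = (cvEquiv as al b v).1 ∧
         (cotreeGraph [al] b (flipN as.length j)).Adj (cvEquiv as al b u).2
           (cvEquiv as al b v).2) ∨
       ((cvEquiv as al b u).1 ≠ (cvEquiv as al b v).1 ∧
         (cotreeGraph as 1 j).Adj (cvEquiv as al b u).1 (cvEquiv as al b v).1))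
  | [], al, b, j, u, v => by
      have h0 : flipN 0 j = j := by simp [flipN]
      rw [List.length_nil, h0]
      constructor
      · intro h
        exact Or.inl ⟨Subsingleton.elim (α := Fin 1) _ _, h⟩
      · rintro (⟨-, h⟩ | ⟨hne, -⟩)
        · exact h
        · exact absurd (Subsingleton.elim (α := Fin 1) _ _) hne
  | a :: rest, al, b, j, u, v => by
      obtain ⟨i, u'⟩ := u
      obtain ⟨k, v'⟩ := v
      have IH := adj_iff rest al b (!j) u' v'
      rw [cvEquiv_cons, cvEquiv_cons, List.length_cons, flipN_succ]
      dsimp only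
      show ((i = k ∧ (cotreeGraph (rest ++ [al]) b (!j)).Adj u' v') ∨ (i ≠ k ∧ j = true)) ↔ _
      rw [IH]
      constructor
      · rintro (⟨hik, (⟨hb1, hb2⟩ | ⟨hb1, hb2⟩)⟩ | ⟨hik, hj⟩)
        · exact Or.inl ⟨by rw [hik, hb1], hb2⟩
        · refine Or.inr ⟨?_, Or.inl ⟨hik, hb2⟩⟩
          intro hcon
          exact hb1 (congrArg Prod.snd hcon)
        · refine Or.inr ⟨?_, Or.inr ⟨hik, hj⟩⟩
          intro hcon
          exact hik (congrArg Prod.fst hcon)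
      · rintro (⟨heq, hb2⟩ | ⟨hne, (⟨hik, hq⟩ | ⟨hik, hj⟩)⟩)
        · exact Or.inl ⟨congrArg Prod.fst heq, Or.inl ⟨congrArg Prod.snd heq, hb2⟩⟩
        · refine Or.inl ⟨hik, Or.inr ⟨fun hcon => hne (Prod.ext hik hcon), hq⟩⟩
        · exact Or.inr ⟨hik, hj⟩

lemma card_copiesVertex : ∀ (l : List ℕ) (b : ℕ), Fintype.card (copiesVertex l b) = l.prod * b
  | [], b => by
      show Fintype.card (Fin b) = _
      simp
  | a :: rest, b => by
      show Fintype.card (Fin a × copiesVertex rest b) = _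
      rw [Fintype.card_prod, Fintype.card_fin, card_copiesVertex rest b, List.prod_cons, mul_assoc]

lemma bottom_adj (al b : ℕ) (w w' : Fin al × Fin b) :
    (cotreeGraph [al] b true).Adj w w' ↔ w.1 ≠ w'.1 := by
  show ((w.1 = w'.1 ∧ (baseGraph b false).Adj w.2 w'.2) ∨ (w.1 ≠ w'.1 ∧ true = true)) ↔ _
  simp [baseGraph]

lemma eigen_const (as : List ℕ) (al b : ℕ) (hlenEven : Even as.length)
    (lam : ℝ) (h0 : lam ≠ 0) (hbl : lam ≠ -(b : ℝ))
    (inst : DecidableRel (cotreeGraph (as ++ [al]) b true).Adj)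
    (x : copiesVertex (as ++ [al]) b → ℝ)
    (hx : ∀ u : copiesVertex (as ++ [al]) b,
      lam * x u = ∑ v : copiesVertex (as ++ [al]) b,
        if (cotreeGraph (as ++ [al]) b true).Adj u v then x v else 0) :
    ∀ u v, (cvEquiv as al b u).1 = (cvEquiv as al b v).1 → x u = x v := by
  classical
  set E := cvEquiv as al b with hE
  set Q := cotreeGraph as 1 true with hQ
  set y : copiesVertex as 1 × (Fin al × Fin b) → ℝ := fun w => x (E.symm w) with hy
  have hflip : flipN as.length true = true := by simp [flipN, hlenEven]
  have adj' : ∀ (β γ : copiesVertex as 1) (p q : Fin al) (s t : Fin b),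
      (cotreeGraph (as ++ [al]) b true).Adj (E.symm (β, p, s)) (E.symm (γ, q, t)) ↔
        ((β = γ ∧ p ≠ q) ∨ (β ≠ γ ∧ Q.Adj β γ)) := by
    intro β γ p q s t
    rw [adj_iff as al b true, hflip]
    rw [hE, Equiv.apply_symm_apply, Equiv.apply_symm_apply, bottom_adj]
  set P : copiesVertex as 1 → Fin al → ℝ := fun β p => ∑ s : Fin b, y (β, p, s) with hP
  set T : copiesVertex as 1 → ℝ := fun β => ∑ p : Fin al, P β p with hT
  set S : copiesVertex as 1 → ℝ :=
    fun β => ∑ γ : copiesVertex as 1, if Q.Adj β γ then T γ else 0 with hS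
  have Eq1 : ∀ (β : copiesVertex as 1) (p : Fin al) (s : Fin b),
      lam * y (β, p, s) = (T β - P β p) + S β := by
    intro β p s
    have h := hx (E.symm (β, p, s))
    have hre : (∑ v : copiesVertex (as ++ [al]) b,
          if (cotreeGraph (as ++ [al]) b true).Adj (E.symm (β, p, s)) v then x v else 0)
        = ∑ w : copiesVertex as 1 × (Fin al × Fin b),
            if (cotreeGraph (as ++ [al]) b true).Adj (E.symm (β, p, s)) (E.symm w)
            then y w else 0 :=
      (Fintype.sum_equiv E.symm _ _ (fun w => rfl)).symm
    rw [h, hre, Fintype.sum_prod_type]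
    have hsummand : ∀ (γ : copiesVertex as 1) (qt : Fin al × Fin b),
        (if (cotreeGraph (as ++ [al]) b true).Adj (E.symm (β, p, s)) (E.symm (γ, qt))
          then y (γ, qt) else 0)
        = (if ((β = γ ∧ p ≠ qt.1) ∨ (β ≠ γ ∧ Q.Adj β γ)) then y (γ, qt) else 0) := by
      intro γ qt
      exact if_congr (by rw [show ((γ, qt) : copiesVertex as 1 × (Fin al × Fin b)) = (γ, qt.1, qt.2) from rfl, adj' β γ p qt.1 s qt.2]) rfl rfl
    simp only [hsummand]
    have hinner : ∀ γ : copiesVertex as 1,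
        (∑ qt : Fin al × Fin b, if ((β = γ ∧ p ≠ qt.1) ∨ (β ≠ γ ∧ Q.Adj β γ))
          then y (γ, qt) else 0)
        = ∑ q : Fin al, if ((β = γ ∧ p ≠ q) ∨ (β ≠ γ ∧ Q.Adj β γ)) then P γ q else 0 := by
      intro γ
      rw [Fintype.sum_prod_type]
      refine Finset.sum_congr rfl fun q _ => ?_
      split_ifs with hc
      · rfl
      · simp
    simp only [hinner]
    have hmid : ∀ γ : copiesVertex as 1,
        (∑ q : Fin al, if ((β = γ ∧ p ≠ q) ∨ (β ≠ γ ∧ Q.Adj β γ)) then P γ q else 0)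
        = if γ = β then T β - P β p else (if Q.Adj β γ then T γ else 0) := by
      intro γ
      by_cases hγ : γ = β
      · rw [if_pos hγ, ← hγ]
        have hterm : ∀ q : Fin al,
            (if ((γ = γ ∧ p ≠ q) ∨ (γ ≠ γ ∧ Q.Adj γ γ)) then P γ q else 0)
            = P γ q - (if q = p then P γ q else 0) := by
          intro q
          by_cases hq : q = p
          · subst hq; simp
          · have hpq : p ≠ q := fun h => hq h.symm
            simp [hpq, hq]
        rw [Finset.sum_congr rfl fun q _ => hterm q, Finset.sum_sub_distrib,
          Finset.sum_ite_eq' Finset.univ p (P γ)]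
        simp [hT]
      · rw [if_neg hγ]
        have hc : ∀ q : Fin al, ((β = γ ∧ p ≠ q) ∨ (β ≠ γ ∧ Q.Adj β γ)) ↔ Q.Adj β γ := by
          intro q
          constructor
          · rintro (⟨h, -⟩ | ⟨-, h⟩)
            · exact absurd h.symm hγ
            · exact h
          · intro h
            exact Or.inr ⟨fun h' => hγ h'.symm, h⟩
        rw [Finset.sum_congr rfl fun q _ => if_congr (hc q) rfl rfl]
        by_cases hadj : Q.Adj β γ <;> simp [hadj, hT]
    simp only [hmid]
    have hfinal : ∀ γ : copiesVertex as 1,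
        (if γ = β then T β - P β p else if Q.Adj β γ then T γ else 0)
        = (if γ = β then T β - P β p else 0) + (if Q.Adj β γ then T γ else 0) := by
      intro γ
      by_cases hγ : γ = β
      · subst hγ; simp [SimpleGraph.irrefl]
      · simp [hγ]
    rw [Finset.sum_congr rfl fun γ _ => hfinal γ, Finset.sum_add_distrib,
      Finset.sum_ite_eq' Finset.univ β]
    simp [hS]
  have Eq2 : ∀ (β : copiesVertex as 1) (p : Fin al),
      (lam + b) * P β p = b * (T β + S β) := by
    intro β p
    have h1 : lam * P β p = (b : ℝ) * ((T β - P β p) + S β) := by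
      calc lam * P β p = ∑ s : Fin b, lam * y (β, p, s) := by rw [hP, Finset.mul_sum]
      _ = ∑ _s : Fin b, ((T β - P β p) + S β) :=
          Finset.sum_congr rfl fun s _ => Eq1 β p s
      _ = (b : ℝ) * ((T β - P β p) + S β) := by
          rw [Finset.sum_const, Finset.card_univ, Fintype.card_fin, nsmul_eq_mul]
    linear_combination h1
  have hbne : lam + (b : ℝ) ≠ 0 := by
    intro h
    exact hbl (by linarith)
  have Eq3 : ∀ (β : copiesVertex as 1) (p q : Fin al), P β p = P β q := by
    intro β p q
    exact mul_left_cancel₀ hbne ((Eq2 β p).trans (Eq2 β q).symm)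
  have Eq4 : ∀ (β : copiesVertex as 1) (p q : Fin al) (s t : Fin b),
      y (β, p, s) = y (β, q, t) := by
    intro β p q s t
    have h1 := Eq1 β p s
    have h2 := Eq1 β q t
    rw [Eq3 β p q] at h1
    exact mul_left_cancel₀ h0 (h1.trans h2.symm)
  intro u v huv
  have hxu : x u = y ((E u).1, (E u).2.1, (E u).2.2) := by
    rw [hy]
    simp
  have hxv : x v = y ((E v).1, (E v).2.1, (E v).2.2) := by
    rw [hy]
    simp
  rw [hxu, hxv, huv]
  exact Eq4 _ _ _ _ _



lemma charmatrix_diagonal {n : Type} [Fintype n] [DecidableEq n] (d : n → ℝ) :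
    charmatrix (diagonal d) = diagonal (fun i => X - C (d i)) := by
  ext i j
  by_cases h : i = j
  · subst h; simp [charmatrix_apply, diagonal_apply_eq]
  · simp [charmatrix_apply, diagonal_apply_ne _ h, h]

lemma isHermitian_charpoly_eq {n : Type} [Fintype n] [DecidableEq n] {A : Matrix n n ℝ}
    (hA : A.IsHermitian) : A.charpoly = ∏ i, (X - C (hA.eigenvalues i)) := by
  have hspec := hA.spectral_theorem
  set U : Matrix n n ℝ := (hA.eigenvectorUnitary : Matrix n n ℝ) with hUdef
  have hU1 : star U * U = 1 := (Matrix.mem_unitaryGroup_iff').mp hA.eigenvectorUnitary.2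
  have hD : Matrix.diagonal (RCLike.ofReal ∘ hA.eigenvalues) = Matrix.diagonal hA.eigenvalues := by
    congr 1
  rw [hD] at hspec
  set D : Matrix n n ℝ := diagonal hA.eigenvalues with hDdef
  have mapmul : ∀ (M N : Matrix n n ℝ), (M * N).map (C : ℝ →+* ℝ[X]) = M.map C * N.map C := by
    intro M N; exact Matrix.map_mul
  have hsmul : (Matrix.scalar n (X : ℝ[X])) = (X : ℝ[X]) • (1 : Matrix n n ℝ[X]) := by
    ext i j
    by_cases h : i = j <;> simp [Matrix.scalar_apply, Matrix.one_apply, h, diagonal_apply]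
  have key : charmatrix A = (U.map (C : ℝ →+* ℝ[X])) * charmatrix D * ((star U).map C) := by
    rw [charmatrix, charmatrix, Matrix.mul_sub, Matrix.sub_mul, RingHom.mapMatrix_apply,
      RingHom.mapMatrix_apply]
    congr 1
    · have hU2 : U * star U = 1 := (Matrix.mem_unitaryGroup_iff).mp hA.eigenvectorUnitary.2
      rw [hsmul, Matrix.mul_smul, Matrix.smul_mul, Matrix.mul_one, ← mapmul, hU2,
        Matrix.map_one _ (map_zero C) (map_one C)]
    · rw [← mapmul, ← mapmul, hspec, Unitary.conjStarAlgAut_apply]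
  rw [Matrix.charpoly, key, det_mul, det_mul, mul_comm, ← mul_assoc, ← det_mul, ← mapmul, hU1]
  rw [Matrix.map_one _ (map_zero C) (map_one C), det_one, one_mul, hDdef,
    charmatrix_diagonal, det_diagonal]

lemma eigMult_le {V : Type} [Fintype V] (G : SimpleGraph V) (lam : ℝ) (k : ℕ)
    (B : Type) [Fintype B] (hcard : Fintype.card B = k) (σ : B → V)
    (hker : ∀ (inst : DecidableRel G.Adj) (x : V → ℝ),
      (@SimpleGraph.adjMatrix ℝ V G inst _ _) *ᵥ x = lam • x → (∀ β, x (σ β) = 0) → x = 0) :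
    eigMult G lam ≤ k := by
  rw [eigMult, graphCharpoly]
  letI := Classical.decEq V
  letI instR : DecidableRel G.Adj := Classical.decRel _
  set A : Matrix V V ℝ := SimpleGraph.adjMatrix ℝ G with hAdef
  have hA : A.IsHermitian := by
    show Aᴴ = A
    ext i j
    rw [Matrix.conjTranspose_apply, star_trivial, hAdef]
    simp [SimpleGraph.adjMatrix_apply, SimpleGraph.adj_comm]
  rw [isHermitian_charpoly_eq hA]
  -- root multiplicity equals the number of eigenvalue indices equal to lam
  have h1 : (∏ i : V, (X - C (hA.eigenvalues i)))
      = (Multiset.map (fun a => X - C a) (Multiset.map hA.eigenvalues Finset.univ.val)).prod := by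
    rw [Multiset.map_map]
    rfl
  have h2 : (∏ i : V, (X - C (hA.eigenvalues i))).rootMultiplicity lam
      = Multiset.count lam (Multiset.map hA.eigenvalues Finset.univ.val) := by
    rw [← Polynomial.count_roots, h1, Polynomial.roots_multiset_prod_X_sub_C]
  rw [h2, Multiset.count_map]
  -- interpret as the cardinality of a subtype
  have h3 : (Multiset.filter (fun i => lam = hA.eigenvalues i) Finset.univ.val).card
      = (Finset.univ.filter (fun i => lam = hA.eigenvalues i)).card := rfl
  rw [h3, ← Fintype.card_coe]
  -- linear independence argument
  set Sf : Finset V := Finset.univ.filter (fun i => lam = hA.eigenvalues i) with hSf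
  have hmem : ∀ i : Sf, hA.eigenvalues i.1 = lam := by
    intro i
    have h := i.2
    simp only [hSf, Finset.mem_filter] at h
    exact h.2.symm
  set f : Sf → (V → ℝ) := fun i => ⇑(hA.eigenvectorBasis i.1) with hf
  set w : Sf → (B → ℝ) := fun i β => f i (σ β) with hw
  have hli : LinearIndependent ℝ w := by
    rw [Fintype.linearIndependent_iff]
    intro g hg
    set xf : V → ℝ := ∑ i : Sf, g i • f i with hxf
    have hmv : A *ᵥ xf = lam • xf := by
      rw [hxf, ← Matrix.mulVecLin_apply, map_sum]
      rw [Finset.smul_sum]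
      refine Finset.sum_congr rfl fun i _ => ?_
      rw [LinearMap.map_smul, Matrix.mulVecLin_apply, hf]
      show g i • (A *ᵥ ⇑(hA.eigenvectorBasis i.1)) = lam • g i • ⇑(hA.eigenvectorBasis i.1)
      rw [hA.mulVec_eigenvectorBasis, hmem i, smul_comm]
    have hz : ∀ β, xf (σ β) = 0 := by
      intro β
      have := congrFun hg β
      rw [Finset.sum_apply] at this
      rw [hxf, Finset.sum_apply]
      simpa [hw, hf] using this
    have hx0 : xf = 0 := hker instR xf hmv hz
    intro i
    -- use linear independence of the eigenvector basis
    have hli2 : LinearIndependent ℝ (fun i : Sf => (hA.eigenvectorBasis i.1 : EuclideanSpace ℝ V)) := by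
      have := (hA.eigenvectorBasis.toBasis.linearIndependent).comp
        (fun i : Sf => i.1) Subtype.val_injective
      simpa [OrthonormalBasis.coe_toBasis, Function.comp_def] using this
    have := Fintype.linearIndependent_iff.mp hli2 g ?_ i
    · exact this
    · rw [← WithLp.ofLp_eq_zero, ← hx0, hxf, hf]; simp
  have := hli.fintype_card_le_finrank
  rw [Module.finrank_fintype_fun_eq_card, hcard] at this
  exact this

end CotreeAux

/-- Let `r ≥ 2` be even and let `G` be the cograph with regular balanced cotree
`T_G(a_1, …, a_{r-1}, 0 | 0, …, 0, b)`, where `[a_1, …, a_{r-1}] = as ++ [al]` are positive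
and `b ≥ 2`.  Then for every real `lam` with `lam ≠ 0` and `lam ≠ -b`, the multiplicity
of `lam` as an eigenvalue of `G` satisfies `m(lam) ≤ a_1 a_2 ⋯ a_{r-2}` (an empty product
being `1`). -/


theorem multiplicity_bound_even_regular_balanced_cotree
    (r : ℕ) (hr : 2 ≤ r) (heven : Even r)
    (as : List ℕ) (al : ℕ) (hlen : (as ++ [al]).length = r - 1)
    (hpos : ∀ a ∈ as ++ [al], 0 < a)
    (b : ℕ) (hb : 2 ≤ b) :
    ∀ lam : ℝ, lam ≠ 0 → lam ≠ -(b : ℝ) →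
      eigMult (cotreeGraph (as ++ [al]) b true) lam ≤ as.prod := by
  intro lam hl0 hlb
  have hlen' : as.length + 1 = r - 1 := by simpa using hlen
  have hEvenLen : Even as.length := by
    obtain ⟨m, hm⟩ := heven
    exact ⟨m - 1, by omega⟩
  have hal : 0 < al := hpos al (by simp)
  have hbpos : 0 < b := by omega
  refine CotreeAux.eigMult_le (cotreeGraph (as ++ [al]) b true) lam as.prod
    (copiesVertex as 1) ?_
    (fun β => (CotreeAux.cvEquiv as al b).symm (β, ⟨0, hal⟩, ⟨0, hbpos⟩)) ?_
  · rw [CotreeAux.card_copiesVertex, mul_one]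
  · intro inst x hmv hz
    letI := inst
    have hx : ∀ u, lam * x u = ∑ v, if (cotreeGraph (as ++ [al]) b true).Adj u v
        then x v else 0 := by
      intro u
      have h1 := congrFun hmv u
      rw [SimpleGraph.adjMatrix_mulVec_apply, Pi.smul_apply, smul_eq_mul] at h1
      rw [← h1, SimpleGraph.neighborFinset_eq_filter, Finset.sum_filter]
    have hconst := CotreeAux.eigen_const as al b hEvenLen lam hl0 hlb inst x hx
    funext u
    have hcu : x u = x ((CotreeAux.cvEquiv as al b).symm
        ((CotreeAux.cvEquiv as al b u).1, ⟨0, hal⟩, ⟨0, hbpos⟩)) := by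
      apply hconst
      rw [Equiv.apply_symm_apply]
    show x u = 0
    rw [hcu]
    exact hz _
end

section
/- Let p ≥ 1 be an integer and let G = (p+1)K_2 ∨ (p+1)K_2, on n = 4p + 4 vertices. Then every eigenvalue of G is an integer, G is not cospectral with the complete graph K_n (the characteristic polynomials of their adjacency matrices differ), and the energy of G equals the energy of K_n: E(G) = 8p + 6 = 2(n − 1). -/
open Polynomial

/-- The join of two graphs: the disjoint union together with all edges between the parts. -/
def joinG {V W : Type} (G : SimpleGraph V) (H : SimpleGraph W) : SimpleGraph (V ⊕ W) where
  Adj x y := match x, y with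
    | Sum.inl a, Sum.inl b => G.Adj a b
    | Sum.inr a, Sum.inr b => H.Adj a b
    | Sum.inl _, Sum.inr _ => True
    | Sum.inr _, Sum.inl _ => True
  symm := by
    constructor
    rintro (a | a) (c | c) h <;> simp_all [SimpleGraph.adj_comm]
  loopless := by
    constructor
    rintro (a | a) h
    · exact G.irrefl h
    · exact H.irrefl h

/-- `m` pairwise disjoint copies of `H` (no edges between distinct copies). -/
def disjCopies {V : Type} (m : ℕ) (H : SimpleGraph V) : SimpleGraph (Fin m × V) where
  Adj x y := x.1 = y.1 ∧ H.Adj x.2 y.2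
  symm := by
    constructor
    rintro ⟨i, x⟩ ⟨k, y⟩ ⟨h1, h2⟩
    exact ⟨h1.symm, H.adj_symm h2⟩
  loopless := by
    constructor
    rintro ⟨i, x⟩ ⟨_, h⟩
    exact H.irrefl h


namespace BEaux
open Matrix Kronecker
noncomputable section

/-! ### Generalities: charpoly under conjugation, charpoly of diagonal matrices -/

lemma graphCharpoly_eq {V : Type} [Fintype V] [DecidableEq V] (G : SimpleGraph V)
    [DecidableRel G.Adj] :
    graphCharpoly G = (SimpleGraph.adjMatrix ℝ G).charpoly := by
  unfold graphCharpoly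
  congr!

lemma charpoly_conj {n : Type} [Fintype n] [DecidableEq n]
    (A S T : Matrix n n ℝ) (h : T * S = 1) :
    (T * A * S).charpoly = A.charpoly := by
  have hT : ((C : ℝ →+* ℝ[X]).mapMatrix T) * ((C : ℝ →+* ℝ[X]).mapMatrix S) = 1 := by
    rw [← _root_.map_mul, h, _root_.map_one]
  unfold Matrix.charpoly
  have key : charmatrix (T * A * S) =
      (C : ℝ →+* ℝ[X]).mapMatrix T * charmatrix A * (C : ℝ →+* ℝ[X]).mapMatrix S := by
    unfold charmatrix
    rw [Matrix.mul_sub, Matrix.sub_mul, _root_.map_mul, _root_.map_mul]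
    congr 1
    rw [
      ← (Matrix.scalar_commute (X : ℝ[X]) (fun r' => mul_comm _ _)
        ((C : ℝ →+* ℝ[X]).mapMatrix T)).eq,
      mul_assoc, hT, mul_one]
  rw [key, det_mul, det_mul]
  have hdet : ((C : ℝ →+* ℝ[X]).mapMatrix T).det * ((C : ℝ →+* ℝ[X]).mapMatrix S).det = 1 := by
    rw [← det_mul, hT, det_one]
  calc ((C : ℝ →+* ℝ[X]).mapMatrix T).det * (charmatrix A).det * ((C : ℝ →+* ℝ[X]).mapMatrix S).det
      = (charmatrix A).det *
        (((C : ℝ →+* ℝ[X]).mapMatrix T).det * ((C : ℝ →+* ℝ[X]).mapMatrix S).det) := by ring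
    _ = _ := by rw [hdet, mul_one]

lemma charpoly_diagonal {n : Type} [Fintype n] [DecidableEq n] (d : n → ℝ) :
    (Matrix.diagonal d).charpoly = ∏ i, (X - C (d i)) := by
  unfold Matrix.charpoly
  have : charmatrix (Matrix.diagonal d) = Matrix.diagonal (fun i => X - C (d i)) := by
    ext i j
    rcases eq_or_ne i j with rfl | hij
    · simp
    · simp [charmatrix_apply_ne _ _ _ hij, diagonal_apply_ne _ hij, diagonal_apply_ne d hij]
  rw [this, det_diagonal]

/-! ### The basic matrices and their diagonalizations -/

def sg : Matrix (Fin 2) (Fin 2) ℝ := Matrix.of fun b b' => if b = b' then 0 else 1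
def Hm : Matrix (Fin 2) (Fin 2) ℝ := !![1,1;1,-1]
def Hi : Matrix (Fin 2) (Fin 2) ℝ := !![1/2,1/2;1/2,-1/2]
def Jm (m : ℕ) : Matrix (Fin m) (Fin m) ℝ := Matrix.of fun _ _ => 1
def Fm (m : ℕ) [NeZero m] : Matrix (Fin m) (Fin m) ℝ :=
  Matrix.of fun i j => if j = 0 then 1 else if i = 0 then 1 else if i = j then -1 else 0
def Gm (m : ℕ) [NeZero m] : Matrix (Fin m) (Fin m) ℝ :=
  Matrix.of fun j k => if k ≠ 0 ∧ j = k then 1/(m:ℝ) - 1 else 1/(m:ℝ)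

lemma HiH : Hi * Hm = 1 := by
  ext i j
  fin_cases i <;> fin_cases j <;>
    simp [Hi, Hm, Matrix.mul_apply, Fin.sum_univ_two, Matrix.one_apply,
      Matrix.vecHead, Matrix.vecTail] <;> norm_num

lemma Hsg : Hi * sg * Hm = Matrix.diagonal (fun b => if b = 0 then (1:ℝ) else -1) := by
  ext i j
  fin_cases i <;> fin_cases j <;>
    simp [Hi, Hm, sg, Matrix.mul_apply, Fin.sum_univ_two, Matrix.diagonal,
      Matrix.vecHead, Matrix.vecTail] <;> norm_num

lemma HJ2 : Hi * Jm 2 * Hm = Matrix.diagonal (fun b => if b = 0 then (2:ℝ) else 0) := by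
  ext i j
  fin_cases i <;> fin_cases j <;>
    simp [Hi, Hm, Jm, Matrix.mul_apply, Fin.sum_univ_two, Matrix.diagonal,
      Matrix.vecHead, Matrix.vecTail] <;> norm_num

variable (m : ℕ) [NeZero m]

lemma mcast_ne : ((m:ℝ)) ≠ 0 := Nat.cast_ne_zero.2 (NeZero.ne m)

lemma Fm_apply_ne (i j : Fin m) (h : i ≠ 0) :
    Fm m i j = (if j = 0 then 1 else 0) + (if j = i then -1 else 0) := by
  rcases eq_or_ne j 0 with rfl | hj
  · simp [Fm, Ne.symm h]
  · rcases eq_or_ne j i with rfl | hji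
    · simp [Fm, h, hj]
    · simp [Fm, hj, h, hji, Ne.symm hji]

lemma Fm_apply_zero (j : Fin m) : Fm m 0 j = 1 := by
  rcases eq_or_ne j 0 with rfl | hj
  · simp [Fm]
  · simp [Fm, hj]

lemma rowF (i : Fin m) : ∑ j, Fm m i j = if i = 0 then (m : ℝ) else 0 := by
  rcases eq_or_ne i 0 with rfl | h
  · simp [Fm_apply_zero]
  · simp [Fm_apply_ne m i _ h, Finset.sum_add_distrib, h]

lemma Fm_symm (i j : Fin m) : Fm m i j = Fm m j i := by
  rcases eq_or_ne i 0 with rfl | hi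
  · rcases eq_or_ne j 0 with rfl | hj
    · rfl
    · simp [Fm_apply_zero, Fm_apply_ne m j 0 hj, Ne.symm hj]
  · rcases eq_or_ne j 0 with rfl | hj
    · simp [Fm_apply_zero, Fm_apply_ne m i 0 hi, Ne.symm hi]
    · rw [Fm_apply_ne m i j hi, Fm_apply_ne m j i hj]
      simp [hi, hj, eq_comm]

lemma colF (k : Fin m) : ∑ i, Fm m i k = if k = 0 then (m : ℝ) else 0 := by
  simp_rw [Fm_symm m _ k]; exact rowF m k

lemma Gm_eq (i j : Fin m) :
    Gm m i j = 1/(m:ℝ) + (if i = 0 then 0 else if j = i then -1 else 0) := by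
  rcases eq_or_ne i 0 with rfl | hi
  · have : ¬(j ≠ 0 ∧ (0:Fin m) = j) := by rintro ⟨h1, rfl⟩; exact h1 rfl
    simp [Gm, this]
  · rcases eq_or_ne j i with rfl | hji
    · have : (j ≠ 0 ∧ j = j) := ⟨hi, rfl⟩
      simp [Gm, this, hi]; ring
    · have : ¬(j ≠ 0 ∧ i = j) := by rintro ⟨h1, rfl⟩; exact hji rfl
      simp [Gm, this, hi, hji]

lemma rowG (i : Fin m) : ∑ j, Gm m i j = if i = 0 then (1:ℝ) else 0 := by
  simp only [Gm_eq, Finset.sum_add_distrib, Finset.sum_const, Finset.card_univ]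
  rcases eq_or_ne i 0 with rfl | h
  · simp [mcast_ne m]
  · simp [h, Finset.sum_ite_eq', mcast_ne m]

lemma FG : Fm m * Gm m = 1 := by
  ext i k
  rw [Matrix.mul_apply]
  have hG : ∀ j, Gm m j k = 1/(m:ℝ) + (if k = 0 then 0 else if j = k then -1 else 0) := by
    intro j
    rcases eq_or_ne k 0 with rfl | hk
    · have : ¬(((0:Fin m) ≠ 0) ∧ j = 0) := by rintro ⟨h1, _⟩; exact h1 rfl
      simp [Gm, this]
    · rcases eq_or_ne j k with rfl | hjk
      · simp [Gm, hk]; ring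
      · have : ¬(k ≠ 0 ∧ j = k) := by rintro ⟨_, h2⟩; exact hjk h2
        simp [Gm, this, hk, hjk]
  simp only [hG, mul_add, Finset.sum_add_distrib, ← Finset.sum_mul, rowF]
  rcases eq_or_ne k 0 with rfl | hk
  · simp only [if_pos rfl, mul_zero, Finset.sum_const_zero, add_zero]
    rcases eq_or_ne i 0 with rfl | h
    · simp [Matrix.one_apply, mcast_ne m]
    · simp [h, Matrix.one_apply, Ne.symm h]
  · simp only [if_neg hk, mul_ite, mul_neg, mul_one, mul_zero,
      Finset.sum_ite_eq', Finset.mem_univ, if_true]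
    rcases eq_or_ne i 0 with rfl | h
    · rw [Fm_apply_zero]
      simp [Matrix.one_apply, Ne.symm hk, mcast_ne m]
    · rw [Fm_apply_ne m i k h]
      rcases eq_or_ne k i with rfl | hki
      · simp [h, Matrix.one_apply]
      · simp [h, hki, Matrix.one_apply, Ne.symm hki, hk]

lemma GF : Gm m * Fm m = 1 := mul_eq_one_comm.mp (FG m)

lemma GJF : Gm m * (Jm m * Fm m) = Matrix.diagonal (fun i => if i = 0 then (m:ℝ) else 0) := by
  have hJF : Jm m * Fm m = Matrix.of (fun _ k => if k = 0 then (m:ℝ) else 0) := by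
    ext j k
    rw [Matrix.mul_apply]
    simp only [Jm, Matrix.of_apply, one_mul]
    exact colF m k
  rw [hJF]
  ext i k
  rw [Matrix.mul_apply]
  simp only [Matrix.of_apply]
  rw [show (∑ j, Gm m i j * (if k = 0 then (m:ℝ) else 0))
      = (∑ j, Gm m i j) * (if k = 0 then (m:ℝ) else 0) from (Finset.sum_mul _ _ _).symm,
    rowG]
  rcases eq_or_ne i 0 with rfl | h <;> rcases eq_or_ne k 0 with rfl | hk <;>
    simp_all [Matrix.diagonal_apply, Ne.symm]

lemma sum_fin_ite (c0 c1 : ℝ) :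
    ∑ i : Fin m, (if i = 0 then c0 else c1) = c0 + ((m:ℝ) - 1) * c1 := by
  have h : ∀ i : Fin m, (if i = 0 then c0 else c1) = c1 + (if i = 0 then c0 - c1 else 0) := by
    intro i; split_ifs <;> ring
  rw [Finset.sum_congr rfl fun i _ => h i, Finset.sum_add_distrib]
  simp [Finset.sum_ite_eq', Finset.card_univ]
  ring

/-! ### The adjacency matrix of the join, and its characteristic polynomial -/

def Amat (m : ℕ) : Matrix (Fin 2 × (Fin m × Fin 2)) (Fin 2 × (Fin m × Fin 2)) ℝ :=
  sg ⊗ₖ (Jm m ⊗ₖ Jm 2) + 1 ⊗ₖ (1 ⊗ₖ sg)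

def dd (m : ℕ) [NeZero m] : Fin 2 × (Fin m × Fin 2) → ℝ := fun v =>
  (if v.1 = 0 then (1:ℝ) else -1) *
      ((if v.2.1 = 0 then (m:ℝ) else 0) * (if v.2.2 = 0 then (2:ℝ) else 0))
    + (if v.2.2 = 0 then (1:ℝ) else -1)

lemma charpoly_Amat : (Amat m).charpoly = ∏ v, (X - C (dd m v)) := by
  have hTS : (Hi ⊗ₖ (Gm m ⊗ₖ Hi)) * (Hm ⊗ₖ (Fm m ⊗ₖ Hm)) = 1 := by
    rw [← Matrix.mul_kronecker_mul, ← Matrix.mul_kronecker_mul, HiH, GF m,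
      Matrix.one_kronecker_one, Matrix.one_kronecker_one]
  have key : (Hi ⊗ₖ (Gm m ⊗ₖ Hi)) * Amat m * (Hm ⊗ₖ (Fm m ⊗ₖ Hm))
      = Matrix.diagonal (dd m) := by
    unfold Amat
    rw [Matrix.mul_add, Matrix.add_mul]
    have h1 : (Hi ⊗ₖ (Gm m ⊗ₖ Hi)) * (sg ⊗ₖ (Jm m ⊗ₖ Jm 2)) * (Hm ⊗ₖ (Fm m ⊗ₖ Hm))
        = (Hi * sg * Hm) ⊗ₖ ((Gm m * (Jm m * Fm m)) ⊗ₖ (Hi * Jm 2 * Hm)) := by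
      rw [← Matrix.mul_kronecker_mul, ← Matrix.mul_kronecker_mul,
        ← Matrix.mul_kronecker_mul, ← Matrix.mul_kronecker_mul, mul_assoc (Gm m)]
    have h2 : (Hi ⊗ₖ (Gm m ⊗ₖ Hi)) * ((1 : Matrix (Fin 2) (Fin 2) ℝ) ⊗ₖ
          ((1 : Matrix (Fin m) (Fin m) ℝ) ⊗ₖ sg)) * (Hm ⊗ₖ (Fm m ⊗ₖ Hm))
        = (Hi * 1 * Hm) ⊗ₖ ((Gm m * 1 * Fm m) ⊗ₖ (Hi * sg * Hm)) := by
      rw [← Matrix.mul_kronecker_mul, ← Matrix.mul_kronecker_mul,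
        ← Matrix.mul_kronecker_mul, ← Matrix.mul_kronecker_mul]
    rw [h1, h2, Hsg, HJ2, GJF m, mul_one, mul_one, HiH, GF m]
    rw [Matrix.diagonal_kronecker_diagonal,
      show (1 : Matrix (Fin 2) (Fin 2) ℝ) = Matrix.diagonal (fun _ => 1) from
        (Matrix.diagonal_one).symm,
      Matrix.diagonal_kronecker_diagonal]
    rw [show (1 : Matrix (Fin m) (Fin m) ℝ) ⊗ₖ
          Matrix.diagonal (fun b => if b = 0 then (1:ℝ) else -1)
        = Matrix.diagonal (fun v : Fin m × Fin 2 => (1:ℝ) * (if v.2 = 0 then (1:ℝ) else -1))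
        from by
      rw [show (1 : Matrix (Fin m) (Fin m) ℝ) = Matrix.diagonal (fun _ => 1) from
        (Matrix.diagonal_one).symm, Matrix.diagonal_kronecker_diagonal]]
    rw [Matrix.diagonal_kronecker_diagonal, Matrix.diagonal_add]
    refine congrArg Matrix.diagonal (funext fun v => ?_)
    show (if v.1 = 0 then (1:ℝ) else -1) *
        ((if v.2.1 = 0 then (m:ℝ) else 0) * (if v.2.2 = 0 then (2:ℝ) else 0))
      + 1 * (1 * (if v.2.2 = 0 then (1:ℝ) else -1)) = dd m v
    unfold dd
    ring
  rw [← charpoly_conj (Amat m) _ _ hTS, key, charpoly_diagonal]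

def sumE (α : Type) : (α ⊕ α) ≃ (Fin 2 × α) where
  toFun x := Sum.elim (fun a => ((0 : Fin 2), a)) (fun a => ((1 : Fin 2), a)) x
  invFun y := if y.1 = 0 then Sum.inl y.2 else Sum.inr y.2
  left_inv := by rintro (a | a) <;> simp
  right_inv := by
    rintro ⟨b, a⟩
    fin_cases b <;> simp

lemma adjJoin [DecidableRel (joinG (disjCopies m (⊤ : SimpleGraph (Fin 2)))
      (disjCopies m (⊤ : SimpleGraph (Fin 2)))).Adj] :
    SimpleGraph.adjMatrix ℝ (joinG (disjCopies m (⊤ : SimpleGraph (Fin 2)))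
        (disjCopies m (⊤ : SimpleGraph (Fin 2))))
      = Matrix.reindex (sumE (Fin m × Fin 2)).symm (sumE (Fin m × Fin 2)).symm (Amat m) := by
  have hll : ∀ u v : Fin m × Fin 2,
      (joinG (disjCopies m (⊤ : SimpleGraph (Fin 2)))
        (disjCopies m (⊤ : SimpleGraph (Fin 2)))).Adj (Sum.inl u) (Sum.inl v)
      ↔ (u.1 = v.1 ∧ u.2 ≠ v.2) := fun u v => Iff.rfl
  have hrr : ∀ u v : Fin m × Fin 2,
      (joinG (disjCopies m (⊤ : SimpleGraph (Fin 2)))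
        (disjCopies m (⊤ : SimpleGraph (Fin 2)))).Adj (Sum.inr u) (Sum.inr v)
      ↔ (u.1 = v.1 ∧ u.2 ≠ v.2) := fun u v => Iff.rfl
  ext x y
  rcases x with u | u <;> rcases y with v | v <;>
    rcases u with ⟨i, b⟩ <;> rcases v with ⟨i', b'⟩ <;>
    simp only [SimpleGraph.adjMatrix_apply, hll, hrr, Matrix.reindex_apply,
      Matrix.submatrix_apply, Equiv.symm_symm, sumE, Equiv.coe_fn_mk, Sum.elim_inl, Sum.elim_inr,
      Amat, Matrix.add_apply, Matrix.kroneckerMap_apply, sg, Jm, Matrix.of_apply,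
      Matrix.one_apply]
  · rcases eq_or_ne i i' with rfl | h1 <;> rcases eq_or_ne b b' with rfl | h2 <;> simp [*]
  · simp [joinG]
  · simp [joinG]
  · rcases eq_or_ne i i' with rfl | h1 <;> rcases eq_or_ne b b' with rfl | h2 <;> simp [*]

/-! ### The complete graph -/

lemma adjTop (n : ℕ) [DecidableRel (⊤ : SimpleGraph (Fin n)).Adj] :
    SimpleGraph.adjMatrix ℝ (⊤ : SimpleGraph (Fin n)) = Jm n - 1 := by
  ext i j
  rcases eq_or_ne i j with rfl | h
  · simp [Jm]
  · simp [Jm, h, Matrix.one_apply]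

lemma charpoly_top (n : ℕ) [NeZero n] [DecidableRel (⊤ : SimpleGraph (Fin n)).Adj] :
    (SimpleGraph.adjMatrix ℝ (⊤ : SimpleGraph (Fin n))).charpoly
      = ∏ i : Fin n, (X - C (if i = 0 then (n:ℝ) - 1 else -1)) := by
  rw [adjTop n]
  have key : Gm n * (Jm n - 1) * Fm n
      = Matrix.diagonal (fun i => if i = 0 then (n:ℝ) - 1 else -1) := by
    rw [Matrix.mul_sub, mul_one, Matrix.sub_mul, mul_assoc, GJF n, GF n]
    rw [show (1 : Matrix (Fin n) (Fin n) ℝ) = Matrix.diagonal (fun _ => 1) from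
      (Matrix.diagonal_one).symm, Matrix.diagonal_sub]
    refine congrArg Matrix.diagonal (funext fun i => ?_)
    show (if i = 0 then (n:ℝ) else 0) - 1 = _
    split_ifs <;> ring
  rw [← charpoly_conj (Jm n - 1) (Fm n) (Gm n) (GF n), key, charpoly_diagonal]

end
end BEaux

/-- Let `p ≥ 1` and let `G = (p+1)K₂ ∨ (p+1)K₂` be the join of two copies of the disjoint
union of `p+1` copies of `K₂`, on `n = 4p + 4` vertices.  Then every eigenvalue of `G` is an
integer, `G` is not cospectral with the complete graph `K_n` (their adjacency matrices have
different characteristic polynomials), and `G` is borderenergetic: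
`E(G) = 8p + 6 = 2(n - 1)`. -/
theorem integral_noncospectral_borderenergetic_join_copies_K2 (p : ℕ) (hp : 1 ≤ p) :
    (∀ lam : ℝ,
        (graphCharpoly (joinG (disjCopies (p + 1) (⊤ : SimpleGraph (Fin 2)))
            (disjCopies (p + 1) (⊤ : SimpleGraph (Fin 2))))).IsRoot lam →
        ∃ z : ℤ, lam = z) ∧
      graphCharpoly (joinG (disjCopies (p + 1) (⊤ : SimpleGraph (Fin 2)))
          (disjCopies (p + 1) (⊤ : SimpleGraph (Fin 2))))
        ≠ graphCharpoly (⊤ : SimpleGraph (Fin (4 * p + 4))) ∧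
      graphEnergy (joinG (disjCopies (p + 1) (⊤ : SimpleGraph (Fin 2)))
          (disjCopies (p + 1) (⊤ : SimpleGraph (Fin 2))))
        = 8 * (p : ℝ) + 6 ∧
      (8 * (p : ℝ) + 6) = 2 * (((4 * p + 4 : ℕ) : ℝ) - 1) := by
  haveI hnz : NeZero (4 * p + 4) := ⟨by omega⟩
  haveI iJ : DecidableRel (joinG (disjCopies (p + 1) (⊤ : SimpleGraph (Fin 2)))
      (disjCopies (p + 1) (⊤ : SimpleGraph (Fin 2)))).Adj := Classical.decRel _
  haveI iT : DecidableRel (⊤ : SimpleGraph (Fin (4 * p + 4))).Adj := Classical.decRel _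
  have hG : graphCharpoly (joinG (disjCopies (p + 1) (⊤ : SimpleGraph (Fin 2)))
        (disjCopies (p + 1) (⊤ : SimpleGraph (Fin 2))))
      = ∏ v, (X - C (BEaux.dd (p + 1) v)) := by
    rw [BEaux.graphCharpoly_eq, BEaux.adjJoin (p + 1), Matrix.charpoly_reindex,
      BEaux.charpoly_Amat]
  have hK : graphCharpoly (⊤ : SimpleGraph (Fin (4 * p + 4)))
      = ∏ i : Fin (4 * p + 4), (X - C (if i = 0 then ((4 * p + 4 : ℕ) : ℝ) - 1 else -1)) := by
    rw [BEaux.graphCharpoly_eq, BEaux.charpoly_top]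
  have hp0 : (0:ℝ) ≤ (p:ℝ) := Nat.cast_nonneg p
  have hdd : ∀ v : Fin 2 × (Fin (p + 1) × Fin 2), BEaux.dd (p + 1) v =
      if v.2.2 = 0 then
        (if v.2.1 = 0 then (if v.1 = 0 then 2 * (p:ℝ) + 3 else -(2 * (p:ℝ) + 1)) else 1)
      else -1 := by
    rintro ⟨a, i, b⟩
    simp only [BEaux.dd]
    rcases eq_or_ne b 0 with rfl | hb
    · rcases eq_or_ne i 0 with rfl | hi
      · rcases eq_or_ne a 0 with rfl | ha
        · simp; push_cast; ring
        · simp [ha]; push_cast; ring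
      · simp [hi]
    · simp [hb]
  refine ⟨?_, ?_, ?_, ?_⟩
  · intro lam hroot
    rw [hG] at hroot
    have h0 : ∏ v, (lam - BEaux.dd (p + 1) v) = 0 := by
      simpa [Polynomial.eval_prod] using hroot
    obtain ⟨v, -, hv⟩ := Finset.prod_eq_zero_iff.mp h0
    have hlam : lam = BEaux.dd (p + 1) v := sub_eq_zero.mp hv
    rw [hlam, hdd v]
    split_ifs
    · exact ⟨2 * (p:ℤ) + 3, by push_cast; ring⟩
    · exact ⟨-(2 * (p:ℤ) + 1), by push_cast; ring⟩
    · exact ⟨1, by norm_num⟩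
    · exact ⟨-1, by norm_num⟩
  · intro heq
    have e1 : (graphCharpoly (joinG (disjCopies (p + 1) (⊤ : SimpleGraph (Fin 2)))
        (disjCopies (p + 1) (⊤ : SimpleGraph (Fin 2))))).eval 1 = 0 := by
      rw [hG, Polynomial.eval_prod]
      refine Finset.prod_eq_zero (Finset.mem_univ
        ((0 : Fin 2), ((⟨1, by omega⟩ : Fin (p + 1)), (0 : Fin 2)))) ?_
      have hne : (⟨1, by omega⟩ : Fin (p + 1)) ≠ 0 := by
        intro h; simpa using congrArg Fin.val h
      have := hdd ((0 : Fin 2), ((⟨1, by omega⟩ : Fin (p + 1)), (0 : Fin 2)))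
      simp only [hne, if_false, if_pos rfl] at this
      simp [this]
    have e2 : (graphCharpoly (⊤ : SimpleGraph (Fin (4 * p + 4)))).eval 1 ≠ 0 := by
      rw [hK, Polynomial.eval_prod]
      refine Finset.prod_ne_zero_iff.mpr fun i _ => ?_
      simp only [Polynomial.eval_sub, Polynomial.eval_X, Polynomial.eval_C]
      split_ifs with h
      · push_cast
        intro hc
        nlinarith [hp0]
      · norm_num
    rw [heq] at e1
    exact e2 e1
  · unfold graphEnergy
    rw [hG]
    rw [show (∏ v, (X - C (BEaux.dd (p + 1) v)))
        = ((Finset.univ.val.map (BEaux.dd (p + 1))).map (fun a => X - C a)).prod from by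
      rw [Multiset.map_map, Finset.prod_eq_multiset_prod]; rfl]
    rw [Polynomial.roots_multiset_prod_X_sub_C, Multiset.map_map,
      ← Finset.sum_eq_multiset_sum]
    have habs : ∀ v : Fin 2 × (Fin (p + 1) × Fin 2),
        ((fun x : ℝ => |x|) ∘ BEaux.dd (p + 1)) v =
        if v.2.2 = 0 then
          (if v.2.1 = 0 then (if v.1 = 0 then 2 * (p:ℝ) + 3 else 2 * (p:ℝ) + 1) else 1)
        else 1 := by
      intro v
      simp only [Function.comp_apply, hdd v]
      split_ifs
      · rw [abs_of_pos (by linarith)]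
      · rw [abs_neg, abs_of_pos (by linarith)]
      · norm_num
      · norm_num
    rw [Finset.sum_congr rfl fun v _ => habs v]
    rw [Fintype.sum_prod_type, Fin.sum_univ_two]
    simp only [Fintype.sum_prod_type, Fin.sum_univ_two]
    norm_num
    rw [Finset.sum_add_distrib, Finset.sum_add_distrib, BEaux.sum_fin_ite, BEaux.sum_fin_ite,
      Finset.sum_const]
    simp only [Finset.card_univ, Fintype.card_prod, Fintype.card_fin, nsmul_eq_mul]
    push_cast
    ring
  · push_cast; ring
end
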